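/- Let (V₀, ω₀), (V₁, ω₁), (V₂, ω₂) be symplectic vector spaces and let Λ ⊆ V₀ × V₁ × V₁ × V₂ be a Lagrangian subspace for ω₀₁₁₂ satisfying the transversality condition Λ + K = V₀ × V₁ × V₁ × V₂. Then the projection π₀₂ is injective on Λ ∩ K, and the image π₀₂(Λ ∩ K) is a Lagrangian subspace of (V₀ × V₂, (−ω₀) ⊕ ω₂). -/

import Mathlib

open LinearMap Submodule

/-- The symplectic complement of a subspace `W` with respect to a bilinear form `ω`. -/
def symplComp {V : Type*} [AddCommGroup V] [Module ℝ V]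
    (ω : V →ₗ[ℝ] V →ₗ[ℝ] ℝ) (W : Submodule ℝ V) : Submodule ℝ V where
  carrier := {v | ∀ w ∈ W, ω v w = 0}
  zero_mem' := by intro w _; simp
  add_mem' := by intro a b ha hb w hw; simp [ha w hw, hb w hw]
  smul_mem' := by intro c a ha w hw; simp [ha w hw]

/-- `ω` is a (linear) symplectic form: alternating and nondegenerate. -/
structure IsSymplecticForm {V : Type*} [AddCommGroup V] [Module ℝ V]
    (ω : V →ₗ[ℝ] V →ₗ[ℝ] ℝ) : Prop where
  alternating : ∀ v, ω v v = 0
  nondeg : ∀ v, (∀ w, ω v w = 0) → v = 0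

/-- A subspace is Lagrangian iff it equals its symplectic complement. -/
def IsLagrangian {V : Type*} [AddCommGroup V] [Module ℝ V]
    (ω : V →ₗ[ℝ] V →ₗ[ℝ] ℝ) (Λ : Submodule ℝ V) : Prop :=
  Λ = symplComp ω Λ

/-- The symplectic form `(−ω₀) ⊕ ω₁` on `V₀ × V₁`. -/
def prodFormNegPos {V₀ V₁ : Type*} [AddCommGroup V₀] [Module ℝ V₀]
    [AddCommGroup V₁] [Module ℝ V₁]
    (ω₀ : V₀ →ₗ[ℝ] V₀ →ₗ[ℝ] ℝ) (ω₁ : V₁ →ₗ[ℝ] V₁ →ₗ[ℝ] ℝ) :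
    (V₀ × V₁) →ₗ[ℝ] (V₀ × V₁) →ₗ[ℝ] ℝ :=
  LinearMap.mk₂ ℝ (fun x y => - ω₀ x.1 y.1 + ω₁ x.2 y.2)
    (by intro x x' y
        simp only [Prod.fst_add, Prod.snd_add, map_add, LinearMap.add_apply]; ring)
    (by intro c x y
        simp only [Prod.smul_fst, Prod.smul_snd, map_smul, LinearMap.smul_apply,
          smul_eq_mul]; ring)
    (by intro x y y'
        simp only [Prod.fst_add, Prod.snd_add, map_add, LinearMap.add_apply]; ring)
    (by intro c x y
        simp only [Prod.smul_fst, Prod.smul_snd, map_smul, LinearMap.smul_apply,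
          smul_eq_mul]; ring)

/-- The symplectic form `ω₀₁₁₂ = (−ω₀) ⊕ ω₁ ⊕ (−ω₁) ⊕ ω₂` on `(V₀ × V₁) × (V₁ × V₂)`. -/
def form0112 {V₀ V₁ V₂ : Type*} [AddCommGroup V₀] [Module ℝ V₀]
    [AddCommGroup V₁] [Module ℝ V₁] [AddCommGroup V₂] [Module ℝ V₂]
    (ω₀ : V₀ →ₗ[ℝ] V₀ →ₗ[ℝ] ℝ) (ω₁ : V₁ →ₗ[ℝ] V₁ →ₗ[ℝ] ℝ)
    (ω₂ : V₂ →ₗ[ℝ] V₂ →ₗ[ℝ] ℝ) :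
    ((V₀ × V₁) × (V₁ × V₂)) →ₗ[ℝ] ((V₀ × V₁) × (V₁ × V₂)) →ₗ[ℝ] ℝ :=
  LinearMap.mk₂ ℝ
    (fun x y => - ω₀ x.1.1 y.1.1 + ω₁ x.1.2 y.1.2 - ω₁ x.2.1 y.2.1 + ω₂ x.2.2 y.2.2)
    (by intro x x' y
        simp only [Prod.fst_add, Prod.snd_add, map_add, LinearMap.add_apply]; ring)
    (by intro c x y
        simp only [Prod.smul_fst, Prod.smul_snd, map_smul, LinearMap.smul_apply,
          smul_eq_mul]; ring)
    (by intro x y y'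
        simp only [Prod.fst_add, Prod.snd_add, map_add, LinearMap.add_apply]; ring)
    (by intro c x y
        simp only [Prod.smul_fst, Prod.smul_snd, map_smul, LinearMap.smul_apply,
          smul_eq_mul]; ring)

/-- `K = V₀ × Δ₁ × V₂`, the product of the full spaces with the diagonal of `V₁`. -/
def Kdiag {V₀ V₁ V₂ : Type*} [AddCommGroup V₀] [Module ℝ V₀]
    [AddCommGroup V₁] [Module ℝ V₁] [AddCommGroup V₂] [Module ℝ V₂] :
    Submodule ℝ ((V₀ × V₁) × (V₁ × V₂)) where
  carrier := {x | x.1.2 = x.2.1}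
  zero_mem' := rfl
  add_mem' := by
    intro a b ha hb
    simp only [Set.mem_setOf_eq] at ha hb ⊢
    show a.1.2 + b.1.2 = a.2.1 + b.2.1
    rw [ha, hb]
  smul_mem' := by
    intro c a ha
    simp only [Set.mem_setOf_eq] at ha ⊢
    show c • a.1.2 = c • a.2.1
    rw [ha]

/-- The projection `π₀₂ : V₀ × V₁ × V₁ × V₂ → V₀ × V₂` onto the outer factors. -/
def proj02 {V₀ V₁ V₂ : Type*} [AddCommGroup V₀] [Module ℝ V₀]
    [AddCommGroup V₁] [Module ℝ V₁] [AddCommGroup V₂] [Module ℝ V₂] :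
    ((V₀ × V₁) × (V₁ × V₂)) →ₗ[ℝ] V₀ × V₂ where
  toFun x := (x.1.1, x.2.2)
  map_add' _ _ := rfl
  map_smul' _ _ := rfl


section Aux

variable {V : Type*} [AddCommGroup V] [Module ℝ V] (ω : V →ₗ[ℝ] V →ₗ[ℝ] ℝ)

lemma mem_symplComp {W : Submodule ℝ V} {v : V} :
    v ∈ symplComp ω W ↔ ∀ w ∈ W, ω v w = 0 := Iff.rfl

lemma skew_of_alt (h : ∀ v, ω v v = 0) (x y : V) : ω x y = - ω y x := by
  have hxy := h (x + y)
  simp only [map_add, LinearMap.add_apply, h x, h y] at hxy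
  linarith

lemma symplComp_eq_orthogonal (h : ∀ v, ω v v = 0) (W : Submodule ℝ V) :
    symplComp ω W = LinearMap.BilinForm.orthogonal ω W := by
  ext v
  rw [mem_symplComp, LinearMap.BilinForm.mem_orthogonal_iff]
  constructor
  · intro hv w hw
    have hz := hv w hw
    show ω w v = 0
    rw [skew_of_alt ω h w v, hz, neg_zero]
  · intro hv w hw
    have hz : ω w v = 0 := hv w hw
    rw [skew_of_alt ω h v w, hz, neg_zero]

lemma orthogonal_sup' (W U : Submodule ℝ V) :
    LinearMap.BilinForm.orthogonal ω (W ⊔ U) =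
      LinearMap.BilinForm.orthogonal ω W ⊓ LinearMap.BilinForm.orthogonal ω U := by
  ext v
  simp only [LinearMap.BilinForm.mem_orthogonal_iff, Submodule.mem_inf]
  constructor
  · intro h
    exact ⟨fun w hw => h w (Submodule.mem_sup_left hw),
      fun u hu => h u (Submodule.mem_sup_right hu)⟩
  · rintro ⟨h1, h2⟩ n hn
    rcases Submodule.mem_sup.mp hn with ⟨a, ha, b, hb, rfl⟩
    have := h1 a ha
    have := h2 b hb
    rw [map_add, LinearMap.add_apply]
    simp_all

lemma orthogonal_inf' [FiniteDimensional ℝ V]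
    (hnd : LinearMap.BilinForm.Nondegenerate ω) (hrefl : LinearMap.BilinForm.IsRefl ω) (W U : Submodule ℝ V) :
    LinearMap.BilinForm.orthogonal ω (W ⊓ U) =
      LinearMap.BilinForm.orthogonal ω W ⊔ LinearMap.BilinForm.orthogonal ω U := by
  conv_lhs =>
    rw [← LinearMap.BilinForm.orthogonal_orthogonal hnd hrefl W,
      ← LinearMap.BilinForm.orthogonal_orthogonal hnd hrefl U,
      ← orthogonal_sup']
  rw [LinearMap.BilinForm.orthogonal_orthogonal hnd hrefl]

end Aux

theorem statement7 {V₀ V₁ V₂ : Type*}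
    [AddCommGroup V₀] [Module ℝ V₀] [FiniteDimensional ℝ V₀]
    [AddCommGroup V₁] [Module ℝ V₁] [FiniteDimensional ℝ V₁]
    [AddCommGroup V₂] [Module ℝ V₂] [FiniteDimensional ℝ V₂]
    (ω₀ : V₀ →ₗ[ℝ] V₀ →ₗ[ℝ] ℝ) (ω₁ : V₁ →ₗ[ℝ] V₁ →ₗ[ℝ] ℝ) (ω₂ : V₂ →ₗ[ℝ] V₂ →ₗ[ℝ] ℝ)
    (hω₀ : IsSymplecticForm ω₀) (hω₁ : IsSymplecticForm ω₁) (hω₂ : IsSymplecticForm ω₂)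
    (Λ : Submodule ℝ ((V₀ × V₁) × (V₁ × V₂)))
    (hΛ : IsLagrangian (form0112 ω₀ ω₁ ω₂) Λ)
    (htrans : Λ ⊔ Kdiag = ⊤) :
    Set.InjOn (⇑proj02) ((Λ ⊓ Kdiag : Submodule ℝ ((V₀ × V₁) × (V₁ × V₂))) : Set ((V₀ × V₁) × (V₁ × V₂))) ∧
    IsLagrangian (prodFormNegPos ω₀ ω₂) (Submodule.map proj02 (Λ ⊓ Kdiag)) := by
  set B := form0112 ω₀ ω₁ ω₂ with hBdef
  have hBapp : ∀ x y : (V₀ × V₁) × (V₁ × V₂),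
      B x y = - ω₀ x.1.1 y.1.1 + ω₁ x.1.2 y.1.2 - ω₁ x.2.1 y.2.1 + ω₂ x.2.2 y.2.2 :=
    fun _ _ => rfl
  have halt : ∀ v, B v v = 0 := by
    intro v
    rw [hBapp, hω₀.alternating, hω₁.alternating, hω₁.alternating, hω₂.alternating]
    ring
  have hrefl : LinearMap.BilinForm.IsRefl B := by
    intro x y h
    rw [skew_of_alt B halt, h, neg_zero]
  have hnd : LinearMap.BilinForm.Nondegenerate B := by
    refine LinearMap.BilinForm.Nondegenerate.ofSeparatingLeft ?_
    rintro ⟨⟨a, b⟩, c, d⟩ hx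
    have ha : a = 0 := hω₀.nondeg a (fun w => by
      have := hx ((w, 0), (0, 0)); rw [hBapp] at this; simpa using this)
    have hb : b = 0 := hω₁.nondeg b (fun w => by
      have := hx ((0, w), (0, 0)); rw [hBapp] at this; simpa using this)
    have hc : c = 0 := hω₁.nondeg c (fun w => by
      have := hx ((0, 0), (w, 0)); rw [hBapp] at this; simpa using this)
    have hd : d = 0 := hω₂.nondeg d (fun w => by
      have := hx ((0, 0), (0, w)); rw [hBapp] at this; simpa using this)
    simp [ha, hb, hc, hd, Prod.ext_iff]
  have hKmem : ∀ x : (V₀ × V₁) × (V₁ × V₂), x ∈ (Kdiag : Submodule ℝ _) ↔ x.1.2 = x.2.1 :=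
    fun _ => Iff.rfl
  have hKperp : ∀ x : (V₀ × V₁) × (V₁ × V₂),
      x ∈ symplComp B Kdiag ↔ x.1.1 = 0 ∧ x.2.2 = 0 ∧ x.1.2 = x.2.1 := by
    rintro ⟨⟨a, b⟩, c, d⟩
    rw [mem_symplComp]
    constructor
    · intro h
      have ha : a = 0 := hω₀.nondeg a (fun w => by
        have := h ((w, 0), (0, 0)) rfl; rw [hBapp] at this; simpa using this)
      have hd : d = 0 := hω₂.nondeg d (fun w => by
        have := h ((0, 0), (0, w)) rfl; rw [hBapp] at this; simpa using this)
      have hbc : b - c = 0 := hω₁.nondeg (b - c) (fun w => by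
        have := h ((0, w), (w, 0)) rfl; rw [hBapp] at this
        simp only [map_zero, LinearMap.zero_apply, map_sub, LinearMap.sub_apply] at this ⊢
        linarith)
      exact ⟨ha, hd, sub_eq_zero.mp hbc⟩
    · rintro ⟨ha, hd, hbc⟩ w hw
      rw [hBapp]
      have hw' : w.1.2 = w.2.1 := hw
      have ha' : a = 0 := ha
      have hd' : d = 0 := hd
      have hbc' : b = c := hbc
      simp only [ha', hd', hbc', hw', map_zero, LinearMap.zero_apply]
      ring
  have hΛorth : LinearMap.BilinForm.orthogonal B Λ = Λ := by
    rw [← symplComp_eq_orthogonal B halt, ← hΛ]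
  have hdisj : Λ ⊓ LinearMap.BilinForm.orthogonal B Kdiag = ⊥ := by
    have h1 : LinearMap.BilinForm.orthogonal B (Λ ⊔ Kdiag) = ⊥ := by
      rw [htrans, LinearMap.BilinForm.orthogonal_top_eq_bot hnd]
    rwa [orthogonal_sup', hΛorth] at h1
  have hσapp : ∀ p q : V₀ × V₂, prodFormNegPos ω₀ ω₂ p q = - ω₀ p.1 q.1 + ω₂ p.2 q.2 :=
    fun _ _ => rfl
  have hπ : ∀ x : (V₀ × V₁) × (V₁ × V₂), proj02 x = (x.1.1, x.2.2) := fun _ => rfl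
  constructor
  · -- injectivity
    intro x hx y hy hxy
    have hxm : x ∈ Λ ⊓ Kdiag := hx
    have hym : y ∈ Λ ⊓ Kdiag := hy
    have h11 : x.1.1 = y.1.1 := congrArg (fun p : V₀ × V₂ => p.1) hxy
    have h22 : x.2.2 = y.2.2 := congrArg (fun p : V₀ × V₂ => p.2) hxy
    have hz : x - y ∈ Λ ⊓ LinearMap.BilinForm.orthogonal B Kdiag := by
      refine Submodule.mem_inf.mpr ⟨Λ.sub_mem hxm.1 hym.1, ?_⟩
      rw [← symplComp_eq_orthogonal B halt, hKperp]
      have hxk : x.1.2 = x.2.1 := hxm.2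
      have hyk : y.1.2 = y.2.1 := hym.2
      refine ⟨?_, ?_, ?_⟩
      · show x.1.1 - y.1.1 = 0; rw [h11, sub_self]
      · show x.2.2 - y.2.2 = 0; rw [h22, sub_self]
      · show x.1.2 - y.1.2 = x.2.1 - y.2.1; rw [hxk, hyk]
    rw [hdisj, Submodule.mem_bot] at hz
    exact sub_eq_zero.mp hz
  · -- Lagrangian
    apply le_antisymm
    · -- isotropic
      rintro p hp
      rcases Submodule.mem_map.mp hp with ⟨w, hw, rfl⟩
      rw [mem_symplComp]
      rintro q hq
      rcases Submodule.mem_map.mp hq with ⟨w', hw', rfl⟩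
      have hb : B w w' = 0 := by
        have : w ∈ symplComp B Λ := hΛ ▸ hw.1
        exact this w' hw'.1
      rw [hBapp] at hb
      have e1 : w.1.2 = w.2.1 := hw.2
      have e2 : w'.1.2 = w'.2.1 := hw'.2
      rw [e1, e2] at hb
      rw [hσapp, hπ, hπ]
      simp only
      linarith
    · -- coisotropic
      rintro ⟨a, c⟩ hp
      rw [mem_symplComp] at hp
      have hx : ((a, (0 : V₁)), ((0 : V₁), c)) ∈ symplComp B (Λ ⊓ Kdiag) := by
        intro w hw
        rw [hBapp]
        simp only [map_zero, LinearMap.zero_apply]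
        have := hp (proj02 w) (Submodule.mem_map.mpr ⟨w, hw, rfl⟩)
        rw [hσapp, hπ] at this
        simpa using this
      rw [symplComp_eq_orthogonal B halt, orthogonal_inf' B hnd hrefl, hΛorth,
        ← symplComp_eq_orthogonal B halt] at hx
      rcases Submodule.mem_sup.mp hx with ⟨l, hl, k, hk, hlk⟩
      rw [hKperp] at hk
      obtain ⟨hk1, hk2, hk3⟩ := hk
      have e11 : l.1.1 + k.1.1 = a := congrArg (fun z => z.1.1) hlk
      have e12 : l.1.2 + k.1.2 = 0 := congrArg (fun z => z.1.2) hlk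
      have e21 : l.2.1 + k.2.1 = 0 := congrArg (fun z => z.2.1) hlk
      have e22 : l.2.2 + k.2.2 = c := congrArg (fun z => z.2.2) hlk
      have hlK : l ∈ (Kdiag : Submodule ℝ _) := by
        rw [hKmem]
        have h1 : l.1.2 = -k.1.2 := eq_neg_of_add_eq_zero_left e12
        have h2 : l.2.1 = -k.2.1 := eq_neg_of_add_eq_zero_left e21
        rw [h1, h2, hk3]
      refine Submodule.mem_map.mpr ⟨l, Submodule.mem_inf.mpr ⟨hl, hlK⟩, ?_⟩
      rw [hπ]
      rw [hk1, add_zero] at e11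
      rw [hk2, add_zero] at e22
      rw [e11, e22]
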